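/- Let H be a separable complex Hilbert space, (Ω, 𝒜) a standard Borel space, and P : 𝒜 → B(H) a PVM. Suppose there exist a countable family (G_i)_{i ∈ ℕ} of positive operators in B(H) with Σ_i ⟪φ, G_i φ⟫ = ‖φ‖² for every φ ∈ H, and density operators (σ_i)_{i ∈ ℕ}, such that every effect of P is a fixed point of the associated Heisenberg-picture entanglement-breaking channel, i.e., for every X ∈ 𝒜 and all φ, ψ ∈ H: ⟪φ, P(X) ψ⟫ = Σ_i tr(σ_i P(X)) · ⟪φ, G_i ψ⟫. Then: (a) P is discrete, i.e., there is a countable set D ⊆ Ω with P(Ω ∖ D) = 0; and (b) if Q : 𝒜' → B(H) is a PVM on a standard Borel space (Ω', 𝒜') satisfying the same fixed-point property with the same families (G_i) and (σ_i), then P(X) Q(Y) = Q(Y) P(X) for all X ∈ 𝒜 and Y ∈ 𝒜'. -/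

import Mathlib

open MeasureTheory
open scoped ComplexInnerProductSpace

/-- A POVM on a measurable space `Ω` with values in `B(H)`: positive operator values,
normalization `M(Ω) = 1`, and weak countable additivity. -/
def IsPOVM {H : Type*} [NormedAddCommGroup H] [InnerProductSpace ℂ H] [CompleteSpace H]
    {Ω : Type*} [MeasurableSpace Ω] (M : Set Ω → (H →L[ℂ] H)) : Prop :=
  (∀ X : Set Ω, MeasurableSet X → (M X).IsPositive) ∧
  M Set.univ = 1 ∧
  ∀ (φ : H) (X : ℕ → Set Ω), (∀ n, MeasurableSet (X n)) →
    (Pairwise fun m n => Disjoint (X m) (X n)) →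
    HasSum (fun n => ⟪φ, M (X n) φ⟫) ⟪φ, M (⋃ n, X n) φ⟫

/-- A PVM: a POVM whose values are orthogonal projections and which is multiplicative. -/
def IsPVM {H : Type*} [NormedAddCommGroup H] [InnerProductSpace ℂ H] [CompleteSpace H]
    {Ω : Type*} [MeasurableSpace Ω] (P : Set Ω → (H →L[ℂ] H)) : Prop :=
  IsPOVM P ∧
  (∀ X : Set Ω, MeasurableSet X → IsSelfAdjoint (P X) ∧ P X * P X = P X) ∧
  ∀ X Y : Set Ω, MeasurableSet X → MeasurableSet Y → P (X ∩ Y) = P X * P Y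

/-- A density operator on `H`: an operator of the form `ρ = Σ_k t_k |ψ_k⟩⟨ψ_k|` for a
countable orthonormal family `(ψ_k)` and nonnegative reals `t_k` summing to `1`, the
series converging in operator norm. -/
structure DensityOperator (H : Type*) [NormedAddCommGroup H] [InnerProductSpace ℂ H]
    [CompleteSpace H] where
  toCLM : H →L[ℂ] H
  ι : Type
  countable : Countable ι
  ψ : ι → H
  t : ι → ℝ
  t_nonneg : ∀ k, 0 ≤ t k
  t_sum : HasSum t 1
  ortho : Orthonormal ℂ ψ
  decomp : HasSum (fun k => ((t k : ℝ) : ℂ) • ((innerSL ℂ (ψ k)).smulRight (ψ k))) toCLM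

/-- The trace `tr(ρ A) = Σ_k t_k ⟪ψ_k, A ψ_k⟫`. -/
noncomputable def DensityOperator.tr {H : Type*} [NormedAddCommGroup H]
    [InnerProductSpace ℂ H] [CompleteSpace H] (ρ : DensityOperator H)
    (A : H →L[ℂ] H) : ℂ :=
  ∑' k : ρ.ι, ((ρ.t k : ℝ) : ℂ) * ⟪ρ.ψ k, A (ρ.ψ k)⟫

set_option linter.unusedSectionVars false

section Helpers
variable {H : Type*} [NormedAddCommGroup H] [InnerProductSpace ℂ H] [CompleteSpace H]

lemma diag_ext' {A B : H →L[ℂ] H} (h : ∀ φ : H, ⟪φ, A φ⟫ = ⟪φ, B φ⟫) : A = B := by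
  have h2 : ∀ x : H, ⟪((A - B : H →L[ℂ] H) : H →ₗ[ℂ] H) x, x⟫ = 0 := by
    intro x
    have : ⟪x, A x - B x⟫ = 0 := by rw [inner_sub_right, h x, sub_self]
    have h5 := congrArg (starRingEnd ℂ) this
    rw [inner_conj_symm, map_zero] at h5
    simpa [inner_sub_left] using h5
  have h3 := (inner_map_self_eq_zero ((A - B : H →L[ℂ] H) : H →ₗ[ℂ] H)).mp h2
  have h4 : (A - B : H →L[ℂ] H) = 0 := ContinuousLinearMap.coe_injective (by simpa using h3)
  exact sub_eq_zero.mp h4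

lemma sa_symm {T : H →L[ℂ] H} (hT : IsSelfAdjoint T) (x y : H) :
    ⟪T x, y⟫ = ⟪x, T y⟫ :=
  (ContinuousLinearMap.isSelfAdjoint_iff_isSymmetric.mp hT) x y

lemma pos_inner_re {T : H →L[ℂ] H} (hT : T.IsPositive) (x : H) :
    ⟪x, T x⟫ = (((⟪x, T x⟫).re : ℝ) : ℂ) ∧ 0 ≤ (⟪x, T x⟫).re := by
  constructor
  · have h1 : ⟪x, T x⟫ = ⟪T x, x⟫ := (sa_symm hT.isSelfAdjoint x x).symm
    have h2 : (starRingEnd ℂ) ⟪x, T x⟫ = ⟪x, T x⟫ := by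
      conv_lhs => rw [h1]
      rw [inner_conj_symm, h1]
    exact (Complex.conj_eq_iff_re.mp h2).symm
  · have := hT.inner_nonneg_right x
    exact (Complex.nonneg_iff.mp this).1

lemma pos_apply_eq_zero {T : H →L[ℂ] H} (hT : T.IsPositive) {φ : H}
    (h : ⟪φ, T φ⟫ = 0) : T φ = 0 := by
  by_contra hx
  set x := T φ with hxdef
  have hxn : (0:ℝ) < ‖x‖ ^ 2 := by
    exact pow_pos (norm_pos_iff.mpr hx) 2
  set C : ℝ := (⟪x, T x⟫).re with hC
  have hC0 : 0 ≤ C := (pos_inner_re hT x).2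
  have key : ∀ t : ℝ, 0 ≤ 2 * t * ‖x‖ ^ 2 + t ^ 2 * C := by
    intro t
    have h0 := hT.inner_nonneg_right (φ + (t : ℂ) • x)
    have hexp : ⟪φ + (t : ℂ) • x, T (φ + (t : ℂ) • x)⟫
        = ((2 * t * ‖x‖ ^ 2 + t ^ 2 * C : ℝ) : ℂ) := by
      have hTx : T (φ + (t : ℂ) • x) = T φ + (t : ℂ) • T x := by
        rw [map_add, T.map_smul]
      rw [hTx, inner_add_right, inner_add_left, inner_add_left, inner_smul_left,
        inner_smul_right, inner_smul_left, inner_smul_right, h]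
      have h1 : ⟪φ, T x⟫ = ⟪x, x⟫ := by
        rw [← sa_symm hT.isSelfAdjoint φ x, ← hxdef]
      have h2 : ⟪x, T φ⟫ = ⟪x, x⟫ := by rw [← hxdef]
      have h3 : ⟪x, T x⟫ = ((C : ℝ) : ℂ) := (pos_inner_re hT x).1
      have h4 : ⟪x, x⟫ = ((‖x‖ ^ 2 : ℝ) : ℂ) := by
        rw [inner_self_eq_norm_sq_to_K]; norm_cast
      rw [h1, h2, h3, h4]
      have : (starRingEnd ℂ) ((t : ℝ) : ℂ) = ((t : ℝ) : ℂ) := by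
        simp [Complex.conj_ofReal]
      rw [this]
      norm_cast
      ring
    rw [hexp] at h0
    exact Complex.zero_le_real.mp h0
  have hbad := key (-(‖x‖ ^ 2 / (C + 1)))
  have hCpos : 0 < C + 1 := by linarith
  have h1 : 2 * (-(‖x‖ ^ 2 / (C + 1))) * ‖x‖ ^ 2 + (-(‖x‖ ^ 2 / (C + 1))) ^ 2 * C
      = (‖x‖ ^ 2) ^ 2 / (C + 1) ^ 2 * (C - 2 * (C + 1)) := by
    field_simp
    ring
  rw [h1] at hbad
  have h2 : C - 2 * (C + 1) < 0 := by linarith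
  have h3 : 0 < (‖x‖ ^ 2) ^ 2 / (C + 1) ^ 2 := by positivity
  nlinarith

end Helpers

section PVM
variable {H : Type*} [NormedAddCommGroup H] [InnerProductSpace ℂ H] [CompleteSpace H]
variable {Ω : Type*} [MeasurableSpace Ω] {P : Set Ω → (H →L[ℂ] H)}

lemma pvm_empty (hP : IsPVM P) : P ∅ = 0 := by
  apply diag_ext'
  intro φ
  have h := hP.1.2.2 φ (fun _ => (∅ : Set Ω)) (fun _ => MeasurableSet.empty)
    (fun m n _ => Set.disjoint_empty ∅)
  simp only [Set.iUnion_empty] at h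
  have h0 : ⟪φ, P ∅ φ⟫ = 0 :=
    tendsto_nhds_unique tendsto_const_nhds h.summable.tendsto_atTop_zero
  simp [h0]

lemma pvm_add (hP : IsPVM P) {A B : Set Ω} (hA : MeasurableSet A) (hB : MeasurableSet B)
    (hd : Disjoint A B) : P (A ∪ B) = P A + P B := by
  classical
  apply diag_ext'
  intro φ
  set f : ℕ → Set Ω := fun n => if n = 0 then A else if n = 1 then B else ∅ with hf
  have hmeas : ∀ n, MeasurableSet (f n) := by
    intro n
    simp only [hf]
    split_ifs <;> [exact hA; exact hB; exact MeasurableSet.empty]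
  have hdis : Pairwise fun m n => Disjoint (f m) (f n) := by
    intro m n hmn
    rcases m with _ | _ | m <;> rcases n with _ | _ | n
    · exact absurd rfl hmn
    · simpa [hf] using hd
    · simp [hf]
    · simpa [hf] using hd.symm
    · exact absurd rfl hmn
    · simp [hf]
    · simp [hf]
    · simp [hf]
    · simp [hf]
  have hU : (⋃ n, f n) = A ∪ B := by
    apply Set.Subset.antisymm
    · refine Set.iUnion_subset fun n => ?_
      simp only [hf]
      split_ifs
      · exact Set.subset_union_left
      · exact Set.subset_union_right
      · exact Set.empty_subset _
    · refine Set.union_subset ?_ ?_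
      · have : A = f 0 := by simp [hf]
        rw [this]; exact Set.subset_iUnion f 0
      · have : B = f 1 := by simp [hf]
        rw [this]; exact Set.subset_iUnion f 1
  have h := hP.1.2.2 φ f hmeas hdis
  rw [hU] at h
  have hfin : HasSum (fun n => ⟪φ, P (f n) φ⟫) (⟪φ, P A φ⟫ + ⟪φ, P B φ⟫) := by
    have hsupp : ∀ n ∉ ({0, 1} : Finset ℕ), ⟪φ, P (f n) φ⟫ = 0 := by
      intro n hn
      simp only [Finset.mem_insert, Finset.mem_singleton] at hn
      push_neg at hn
      have : f n = ∅ := by simp [hf, hn.1, hn.2]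
      rw [this, pvm_empty hP]
      simp
    have : HasSum (fun n => ⟪φ, P (f n) φ⟫) (∑ n ∈ ({0, 1} : Finset ℕ), ⟪φ, P (f n) φ⟫) :=
      hasSum_sum_of_ne_finset_zero hsupp
    convert this using 1
    simp [hf]
  have := h.unique hfin
  rw [this]
  simp [ContinuousLinearMap.add_apply, inner_add_right]

lemma pvm_compl (hP : IsPVM P) {X : Set Ω} (hX : MeasurableSet X) :
    P Xᶜ = 1 - P X := by
  have h := pvm_add hP hX hX.compl (disjoint_compl_right)
  rw [Set.union_compl_self, hP.1.2.1] at h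
  rw [eq_sub_iff_add_eq, add_comm, ← h]

lemma pvm_diag (hP : IsPVM P) {X : Set Ω} (hX : MeasurableSet X) (φ : H) :
    ⟪φ, P X φ⟫ = ((‖P X φ‖ ^ 2 : ℝ) : ℂ) := by
  have hm : P X (P X φ) = P X φ := by
    conv_rhs => rw [← (hP.2.1 X hX).2]
    rfl
  calc ⟪φ, P X φ⟫ = ⟪φ, P X (P X φ)⟫ := by rw [hm]
    _ = ⟪P X φ, P X φ⟫ := by rw [← sa_symm (hP.2.1 X hX).1 φ (P X φ)]
    _ = ((‖P X φ‖ ^ 2 : ℝ) : ℂ) := by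
        rw [inner_self_eq_norm_sq_to_K]; norm_cast

lemma pvm_norm_sq_le (hP : IsPVM P) {X : Set Ω} (hX : MeasurableSet X) (φ : H) :
    ‖P X φ‖ ^ 2 ≤ ‖φ‖ ^ 2 := by
  have h1 : ((‖P X φ‖ ^ 2 : ℝ) : ℂ) = ⟪φ, P X φ⟫ := (pvm_diag hP hX φ).symm
  have h2 : ‖⟪φ, P X φ⟫‖ ≤ ‖φ‖ * ‖P X φ‖ := norm_inner_le_norm φ (P X φ)
  have h3 : ‖P X φ‖ ^ 2 ≤ ‖φ‖ * ‖P X φ‖ := by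
    calc ‖P X φ‖ ^ 2 = ‖((‖P X φ‖ ^ 2 : ℝ) : ℂ)‖ := by
          rw [Complex.norm_real]
          exact (Real.norm_of_nonneg (sq_nonneg _)).symm
      _ = ‖⟪φ, P X φ⟫‖ := by rw [h1]
      _ ≤ ‖φ‖ * ‖P X φ‖ := h2
  rcases le_or_gt ‖P X φ‖ 0 with h | h
  · have : ‖P X φ‖ = 0 := le_antisymm h (norm_nonneg _)
    rw [this]; simpa using sq_nonneg ‖φ‖
  · have h4 : ‖P X φ‖ ≤ ‖φ‖ := by
      have := h3
      rw [pow_two] at this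
      exact le_of_mul_le_mul_right (by linarith [this]) h
    nlinarith [norm_nonneg (P X φ), norm_nonneg φ]

lemma pvm_mono_sq (hP : IsPVM P) {A B : Set Ω} (hA : MeasurableSet A) (hB : MeasurableSet B)
    (hAB : A ⊆ B) (φ : H) : ‖P A φ‖ ^ 2 ≤ ‖P B φ‖ ^ 2 := by
  have hBA : B = A ∪ (B \ A) := by
    rw [Set.union_diff_cancel hAB]
  have hdis : Disjoint A (B \ A) := Set.disjoint_sdiff_right
  have hadd := pvm_add hP hA (hB.diff hA) hdis
  rw [← hBA] at hadd
  have hdiag : ((‖P B φ‖ ^ 2 : ℝ) : ℂ)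
      = ((‖P A φ‖ ^ 2 : ℝ) : ℂ) + ((‖P (B \ A) φ‖ ^ 2 : ℝ) : ℂ) := by
    rw [← pvm_diag hP hB φ, ← pvm_diag hP hA φ, ← pvm_diag hP (hB.diff hA) φ, hadd]
    simp [ContinuousLinearMap.add_apply, inner_add_right]
  have hreal : ‖P B φ‖ ^ 2 = ‖P A φ‖ ^ 2 + ‖P (B \ A) φ‖ ^ 2 := by
    exact_mod_cast hdiag
  nlinarith [sq_nonneg ‖P (B \ A) φ‖]

end PVM

section Trace
variable {H : Type*} [NormedAddCommGroup H] [InnerProductSpace ℂ H] [CompleteSpace H]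
variable {Ω : Type*} [MeasurableSpace Ω] {P : Set Ω → (H →L[ℂ] H)}

noncomputable def trR (ρ : DensityOperator H) (P : Set Ω → (H →L[ℂ] H)) (X : Set Ω) : ℝ :=
  ∑' k, ρ.t k * ‖P X (ρ.ψ k)‖ ^ 2

lemma norm_sq_one (ρ : DensityOperator H) (k : ρ.ι) : ‖ρ.ψ k‖ ^ 2 = 1 := by
  rw [ρ.ortho.1 k]; norm_num

lemma tr_summable (ρ : DensityOperator H) (hP : IsPVM P) {X : Set Ω} (hX : MeasurableSet X) :
    Summable (fun k => ρ.t k * ‖P X (ρ.ψ k)‖ ^ 2) := by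
  have := ρ.countable
  refine Summable.of_nonneg_of_le
    (fun k => mul_nonneg (ρ.t_nonneg k) (sq_nonneg _)) (fun k => ?_) ρ.t_sum.summable
  have h1 : ‖P X (ρ.ψ k)‖ ^ 2 ≤ 1 := by
    have := pvm_norm_sq_le hP hX (ρ.ψ k)
    rwa [norm_sq_one ρ k] at this
  exact mul_le_of_le_one_right (ρ.t_nonneg k) h1

lemma tr_eq_trR (ρ : DensityOperator H) (hP : IsPVM P) {X : Set Ω} (hX : MeasurableSet X) :
    ρ.tr (P X) = ((trR ρ P X : ℝ) : ℂ) := by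
  unfold DensityOperator.tr trR
  rw [Complex.ofReal_tsum]
  refine tsum_congr fun k => ?_
  rw [pvm_diag hP hX (ρ.ψ k)]
  push_cast
  ring

lemma trR_nonneg (ρ : DensityOperator H) (X : Set Ω) : 0 ≤ trR ρ P X :=
  tsum_nonneg fun k => mul_nonneg (ρ.t_nonneg k) (sq_nonneg _)

lemma trR_le_one (ρ : DensityOperator H) (hP : IsPVM P) {X : Set Ω} (hX : MeasurableSet X) :
    trR ρ P X ≤ 1 := by
  have h1 : trR ρ P X ≤ ∑' k, ρ.t k := by
    refine Summable.tsum_le_tsum (fun k => ?_) (tr_summable ρ hP hX) ρ.t_sum.summable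
    have h1 : ‖P X (ρ.ψ k)‖ ^ 2 ≤ 1 := by
      have := pvm_norm_sq_le hP hX (ρ.ψ k)
      rwa [norm_sq_one ρ k] at this
    exact mul_le_of_le_one_right (ρ.t_nonneg k) h1
  rwa [ρ.t_sum.tsum_eq] at h1

lemma trR_eq_zero_iff (ρ : DensityOperator H) (hP : IsPVM P) {X : Set Ω}
    (hX : MeasurableSet X) :
    trR ρ P X = 0 ↔ ∀ k, ρ.t k * ‖P X (ρ.ψ k)‖ ^ 2 = 0 := by
  constructor
  · intro h k
    have hle := Summable.le_tsum (tr_summable ρ hP hX) k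
      (fun j _ => mul_nonneg (ρ.t_nonneg j) (sq_nonneg _))
    have : ρ.t k * ‖P X (ρ.ψ k)‖ ^ 2 ≤ 0 := by
      rw [← h]; exact hle
    exact le_antisymm this (mul_nonneg (ρ.t_nonneg k) (sq_nonneg _))
  · intro h
    unfold trR
    simp [h]

lemma tr_eq_zero_iff (ρ : DensityOperator H) (hP : IsPVM P) {X : Set Ω}
    (hX : MeasurableSet X) :
    ρ.tr (P X) = 0 ↔ ∀ k, ρ.t k * ‖P X (ρ.ψ k)‖ ^ 2 = 0 := by
  rw [tr_eq_trR ρ hP hX, Complex.ofReal_eq_zero]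
  exact trR_eq_zero_iff ρ hP hX

lemma pvm_norm_sq_compl (hP : IsPVM P) {X : Set Ω} (hX : MeasurableSet X) (φ : H) :
    ‖P Xᶜ φ‖ ^ 2 = ‖φ‖ ^ 2 - ‖P X φ‖ ^ 2 := by
  have h1 : ((‖P Xᶜ φ‖ ^ 2 : ℝ) : ℂ) = ((‖φ‖ ^ 2 : ℝ) : ℂ) - ((‖P X φ‖ ^ 2 : ℝ) : ℂ) := by
    rw [← pvm_diag hP hX.compl φ, ← pvm_diag hP hX φ, pvm_compl hP hX]
    have : ((‖φ‖ ^ 2 : ℝ) : ℂ) = ⟪φ, φ⟫ := by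
      rw [inner_self_eq_norm_sq_to_K]; norm_cast
    rw [this]
    simp [ContinuousLinearMap.sub_apply, inner_sub_right]
  exact_mod_cast h1

lemma trR_compl (ρ : DensityOperator H) (hP : IsPVM P) {X : Set Ω} (hX : MeasurableSet X) :
    trR ρ P Xᶜ = 1 - trR ρ P X := by
  have := ρ.countable
  have h1 : ∀ k, ρ.t k * ‖P Xᶜ (ρ.ψ k)‖ ^ 2 = ρ.t k - ρ.t k * ‖P X (ρ.ψ k)‖ ^ 2 := by
    intro k
    rw [pvm_norm_sq_compl hP hX (ρ.ψ k), norm_sq_one ρ k]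
    ring
  unfold trR
  rw [tsum_congr h1, Summable.tsum_sub ρ.t_sum.summable (tr_summable ρ hP hX), ρ.t_sum.tsum_eq]

lemma tr_compl (ρ : DensityOperator H) (hP : IsPVM P) {X : Set Ω} (hX : MeasurableSet X) :
    ρ.tr (P Xᶜ) = 1 - ρ.tr (P X) := by
  rw [tr_eq_trR ρ hP hX.compl, tr_eq_trR ρ hP hX, trR_compl ρ hP hX]
  push_cast
  ring

lemma tr_univ (ρ : DensityOperator H) (hP : IsPVM P) : ρ.tr (P Set.univ) = 1 := by
  have h := tr_compl ρ hP MeasurableSet.empty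
  rw [Set.compl_empty] at h
  have h0 : ρ.tr (P ∅) = 0 := by
    rw [tr_eq_zero_iff ρ hP MeasurableSet.empty]
    intro k
    rw [pvm_empty hP]
    simp
  rw [h, h0, sub_zero]

lemma tr_null_mono (ρ : DensityOperator H) (hP : IsPVM P) {A B : Set Ω}
    (hA : MeasurableSet A) (hB : MeasurableSet B) (hAB : A ⊆ B)
    (h : ρ.tr (P B) = 0) : ρ.tr (P A) = 0 := by
  rw [tr_eq_zero_iff ρ hP hB] at h
  rw [tr_eq_zero_iff ρ hP hA]
  intro k
  rcases mul_eq_zero.mp (h k) with ht | hn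
  · rw [ht, zero_mul]
  · have h2 : ‖P A (ρ.ψ k)‖ ^ 2 ≤ 0 := by
      rw [← hn]; exact pvm_mono_sq hP hA hB hAB (ρ.ψ k)
    have h3 : ‖P A (ρ.ψ k)‖ ^ 2 = 0 := le_antisymm h2 (sq_nonneg _)
    rw [h3, mul_zero]

lemma tr_null_iUnion (ρ : DensityOperator H) (hP : IsPVM P) {X : ℕ → Set Ω}
    (hX : ∀ n, MeasurableSet (X n)) (h : ∀ n, ρ.tr (P (X n)) = 0) :
    ρ.tr (P (⋃ n, X n)) = 0 := by
  rw [tr_eq_zero_iff ρ hP (MeasurableSet.iUnion hX)]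
  intro k
  rcases eq_or_ne (ρ.t k) 0 with ht | ht
  · rw [ht, zero_mul]
  · have hn : ∀ n, ‖P (X n) (ρ.ψ k)‖ ^ 2 = 0 := by
      intro n
      rcases mul_eq_zero.mp ((tr_eq_zero_iff ρ hP (hX n)).mp (h n) k) with h' | h'
      · exact absurd h' ht
      · exact h'
    set D : ℕ → Set Ω := fun n => disjointed X n with hD
    have hDmeas : ∀ n, MeasurableSet (D n) := MeasurableSet.disjointed hX
    have hDdis : Pairwise fun m n => Disjoint (D m) (D n) := disjoint_disjointed X
    have hsum := hP.1.2.2 (ρ.ψ k) D hDmeas hDdis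
    have hDU : (⋃ n, D n) = ⋃ n, X n := iUnion_disjointed
    rw [hDU] at hsum
    have hterm : ∀ n, ⟪ρ.ψ k, P (D n) (ρ.ψ k)⟫ = 0 := by
      intro n
      rw [pvm_diag hP (hDmeas n)]
      have h2 : ‖P (D n) (ρ.ψ k)‖ ^ 2 ≤ 0 := by
        rw [← hn n]
        exact pvm_mono_sq hP (hDmeas n) (hX n) (disjointed_subset X n) (ρ.ψ k)
      have h3 : ‖P (D n) (ρ.ψ k)‖ ^ 2 = 0 := le_antisymm h2 (sq_nonneg _)
      rw [h3]; norm_num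
    have hzero : ⟪ρ.ψ k, P (⋃ n, X n) (ρ.ψ k)⟫ = 0 := by
      have : HasSum (fun n : ℕ => (0 : ℂ)) ⟪ρ.ψ k, P (⋃ n, X n) (ρ.ψ k)⟫ := by
        convert hsum using 1
        exact (funext hterm).symm
      exact (hasSum_zero.unique this).symm
    rw [pvm_diag hP (MeasurableSet.iUnion hX)] at hzero
    have : ‖P (⋃ n, X n) (ρ.ψ k)‖ ^ 2 = 0 := by exact_mod_cast hzero
    rw [this, mul_zero]

end Trace

section Fix
variable {H : Type*} [NormedAddCommGroup H] [InnerProductSpace ℂ H] [CompleteSpace H]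
variable {Ω : Type*} [MeasurableSpace Ω] {P : Set Ω → (H →L[ℂ] H)}
variable {G : ℕ → H →L[ℂ] H} {σ : ℕ → DensityOperator H}

lemma ker_lemma (hP : IsPVM P)
    (hGpos : ∀ i, (G i).IsPositive)
    (hGsum : ∀ φ : H, HasSum (fun i => ⟪φ, G i φ⟫) ((‖φ‖ ^ 2 : ℝ) : ℂ))
    (hfix : ∀ X : Set Ω, MeasurableSet X → ∀ φ χ : H,
      ⟪φ, P X χ⟫ = ∑' i, (σ i).tr (P X) * ⟪φ, G i χ⟫)
    {X : Set Ω} (hX : MeasurableSet X) {i : ℕ} (hi : (σ i).tr (P X) ≠ 0)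
    {φ : H} (hφ : P X φ = 0) : G i φ = 0 := by
  set g : ℕ → ℝ := fun j => (⟪φ, G j φ⟫).re with hg
  have hgre : ∀ j, ⟪φ, G j φ⟫ = ((g j : ℝ) : ℂ) := fun j => (pos_inner_re (hGpos j) φ).1
  have hg0 : ∀ j, 0 ≤ g j := fun j => (pos_inner_re (hGpos j) φ).2
  have hgsum : HasSum g (‖φ‖ ^ 2) := by
    have h := hGsum φ
    rw [show (fun i => ⟪φ, G i φ⟫) = fun i => ((g i : ℝ) : ℂ) from funext hgre] at h
    exact Complex.hasSum_ofReal.mp h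
  set r : ℕ → ℝ := fun j => trR (σ j) P X with hr
  have hrtr : ∀ j, (σ j).tr (P X) = ((r j : ℝ) : ℂ) := fun j => tr_eq_trR (σ j) hP hX
  have hr0 : ∀ j, 0 ≤ r j := fun j => trR_nonneg (σ j) X
  have hr1 : ∀ j, r j ≤ 1 := fun j => trR_le_one (σ j) hP hX
  have hsum0 : (0 : ℂ) = ∑' j, ((r j * g j : ℝ) : ℂ) := by
    have h := hfix X hX φ φ
    rw [hφ, inner_zero_right] at h
    refine h.trans (tsum_congr fun j => ?_)
    rw [hrtr j, hgre j]
    push_cast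
    ring
  have hsummable : Summable (fun j => r j * g j) :=
    Summable.of_nonneg_of_le (fun j => mul_nonneg (hr0 j) (hg0 j))
      (fun j => mul_le_of_le_one_left (hg0 j) (hr1 j)) hgsum.summable
  have htsum0 : ∑' j, r j * g j = 0 := by
    have : ((∑' j, r j * g j : ℝ) : ℂ) = 0 := by
      rw [Complex.ofReal_tsum, ← hsum0]
    exact_mod_cast this
  have hterm0 : r i * g i = 0 := by
    have hle := Summable.le_tsum hsummable i (fun j _ => mul_nonneg (hr0 j) (hg0 j))
    rw [htsum0] at hle
    exact le_antisymm hle (mul_nonneg (hr0 i) (hg0 i))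
  have hri : r i ≠ 0 := by
    intro h0
    apply hi
    rw [hrtr i, h0, Complex.ofReal_zero]
  have hgi : g i = 0 := by
    rcases mul_eq_zero.mp hterm0 with h' | h'
    · exact absurd h' hri
    · exact h'
  apply pos_apply_eq_zero (hGpos i)
  rw [hgre i, hgi, Complex.ofReal_zero]

lemma comp_left (hP : IsPVM P)
    (hGpos : ∀ i, (G i).IsPositive)
    (hGsum : ∀ φ : H, HasSum (fun i => ⟪φ, G i φ⟫) ((‖φ‖ ^ 2 : ℝ) : ℂ))
    (hfix : ∀ X : Set Ω, MeasurableSet X → ∀ φ χ : H,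
      ⟪φ, P X χ⟫ = ∑' i, (σ i).tr (P X) * ⟪φ, G i χ⟫)
    {X : Set Ω} (hX : MeasurableSet X) {i : ℕ} (hi : (σ i).tr (P X) ≠ 0) :
    G i * P X = G i := by
  ext φ
  have hker : P X (φ - P X φ) = 0 := by
    rw [map_sub]
    have : P X (P X φ) = P X φ := by
      conv_rhs => rw [← (hP.2.1 X hX).2]
      rfl
    rw [this, sub_self]
  have h0 := ker_lemma hP hGpos hGsum hfix hX hi hker
  rw [map_sub] at h0
  have h1 : G i (P X φ) = G i φ := by
    have := sub_eq_zero.mp h0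
    exact this.symm
  simpa using h1

lemma comp_right (hP : IsPVM P)
    (hGpos : ∀ i, (G i).IsPositive)
    (hGsum : ∀ φ : H, HasSum (fun i => ⟪φ, G i φ⟫) ((‖φ‖ ^ 2 : ℝ) : ℂ))
    (hfix : ∀ X : Set Ω, MeasurableSet X → ∀ φ χ : H,
      ⟪φ, P X χ⟫ = ∑' i, (σ i).tr (P X) * ⟪φ, G i χ⟫)
    {X : Set Ω} (hX : MeasurableSet X) {i : ℕ} (hi : (σ i).tr (P X) ≠ 0) :
    P X * G i = G i := by
  have h := congrArg star (comp_left hP hGpos hGsum hfix hX hi)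
  rwa [star_mul, (hGpos i).isSelfAdjoint.star_eq, (hP.2.1 X hX).1.star_eq] at h

lemma commute_G (hP : IsPVM P)
    (hGpos : ∀ i, (G i).IsPositive)
    (hGsum : ∀ φ : H, HasSum (fun i => ⟪φ, G i φ⟫) ((‖φ‖ ^ 2 : ℝ) : ℂ))
    (hfix : ∀ X : Set Ω, MeasurableSet X → ∀ φ χ : H,
      ⟪φ, P X χ⟫ = ∑' i, (σ i).tr (P X) * ⟪φ, G i χ⟫)
    {X : Set Ω} (hX : MeasurableSet X) (i : ℕ) :
    P X * G i = G i * P X := by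
  by_cases hi : (σ i).tr (P X) = 0
  · have hic : (σ i).tr (P Xᶜ) ≠ 0 := by
      rw [tr_compl (σ i) hP hX, hi, sub_zero]
      exact one_ne_zero
    have h1 := comp_left hP hGpos hGsum hfix hX.compl hic
    have h2 := comp_right hP hGpos hGsum hfix hX.compl hic
    rw [pvm_compl hP hX] at h1 h2
    have h1' : G i * P X = 0 := by
      rw [mul_sub, mul_one] at h1
      exact sub_eq_self.mp h1
    have h2' : P X * G i = 0 := by
      rw [sub_mul, one_mul] at h2
      exact sub_eq_self.mp h2
    rw [h1', h2']
  · rw [comp_left hP hGpos hGsum hfix hX hi, comp_right hP hGpos hGsum hfix hX hi]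

lemma dichotomy (hP : IsPVM P)
    (hGpos : ∀ i, (G i).IsPositive)
    (hGsum : ∀ φ : H, HasSum (fun i => ⟪φ, G i φ⟫) ((‖φ‖ ^ 2 : ℝ) : ℂ))
    (hfix : ∀ X : Set Ω, MeasurableSet X → ∀ φ χ : H,
      ⟪φ, P X χ⟫ = ∑' i, (σ i).tr (P X) * ⟪φ, G i χ⟫)
    {i : ℕ} (hGi : G i ≠ 0) {X : Set Ω} (hX : MeasurableSet X) :
    (σ i).tr (P X) = 0 ∨ (σ i).tr (P Xᶜ) = 0 := by
  by_contra hcon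
  push_neg at hcon
  have h1 := comp_left hP hGpos hGsum hfix hX hcon.1
  have h2 := comp_left hP hGpos hGsum hfix hX.compl hcon.2
  have h3 : P Xᶜ * P X = 0 := by
    rw [← hP.2.2 Xᶜ X hX.compl hX, Set.compl_inter_self, pvm_empty hP]
  have h4 : G i = 0 := by
    calc G i = G i * P X := h1.symm
      _ = (G i * P Xᶜ) * P X := by rw [h2]
      _ = G i * (P Xᶜ * P X) := by rw [mul_assoc]
      _ = 0 := by rw [h3, mul_zero]
  exact hGi h4

end Fix

section Point
variable {H : Type*} [NormedAddCommGroup H] [InnerProductSpace ℂ H] [CompleteSpace H]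
variable {Ω : Type*} [MeasurableSpace Ω] [StandardBorelSpace Ω] {P : Set Ω → (H →L[ℂ] H)}
variable {G : ℕ → H →L[ℂ] H} {σ : ℕ → DensityOperator H}

lemma exists_point (hP : IsPVM P)
    (hGpos : ∀ i, (G i).IsPositive)
    (hGsum : ∀ φ : H, HasSum (fun i => ⟪φ, G i φ⟫) ((‖φ‖ ^ 2 : ℝ) : ℂ))
    (hfix : ∀ X : Set Ω, MeasurableSet X → ∀ φ χ : H,
      ⟪φ, P X χ⟫ = ∑' i, (σ i).tr (P X) * ⟪φ, G i χ⟫)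
    {i : ℕ} (hGi : G i ≠ 0) :
    ∃ ω : Ω, ∀ X : Set Ω, MeasurableSet X → ω ∉ X → (σ i).tr (P X) = 0 := by
  classical
  have hCG : MeasurableSpace.CountablyGenerated Ω := inferInstance
  have hMeq := @MeasurableSpace.generateFrom_natGeneratingSequence Ω _ hCG
  set S : ℕ → Set Ω := MeasurableSpace.natGeneratingSequence Ω with hS
  have hSmeas : ∀ n, MeasurableSet (S n) := fun n =>
    MeasurableSpace.measurableSet_natGeneratingSequence n
  set B : ℕ → Set Ω := fun n => if (σ i).tr (P (S n)ᶜ) = 0 then S n else (S n)ᶜ with hB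
  have hBmeas : ∀ n, MeasurableSet (B n) := by
    intro n; simp only [hB]; split_ifs; exacts [hSmeas n, (hSmeas n).compl]
  have hBc : ∀ n, (σ i).tr (P (B n)ᶜ) = 0 := by
    intro n
    by_cases h : (σ i).tr (P (S n)ᶜ) = 0
    · simp only [hB, if_pos h]; exact h
    · rcases dichotomy hP hGpos hGsum hfix hGi (hSmeas n) with h0 | h0
      · simp only [hB, if_neg h, compl_compl]; exact h0
      · exact absurd h0 h
  set K : Set Ω := ⋂ n, B n with hK
  have hKmeas : MeasurableSet K := MeasurableSet.iInter fun n => hBmeas n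
  have hKc : (σ i).tr (P Kᶜ) = 0 := by
    have hcompl : Kᶜ = ⋃ n, (B n)ᶜ := by rw [hK, Set.compl_iInter]
    rw [hcompl]
    exact tr_null_iUnion (σ i) hP (fun n => (hBmeas n).compl) hBc
  have hK1 : (σ i).tr (P K) = 1 := by
    have h := tr_compl (σ i) hP hKmeas.compl
    rw [compl_compl, hKc, sub_zero] at h
    exact h
  have hKne : K.Nonempty := by
    rw [Set.nonempty_iff_ne_empty]
    intro hempty
    rw [hempty, pvm_empty hP] at hK1
    unfold DensityOperator.tr at hK1
    simp at hK1
  obtain ⟨ω, hω⟩ := hKne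
  have hdich : ∀ n, (σ i).tr (P (S n)) = 0 ∨ (σ i).tr (P (S n)ᶜ) = 0 := fun n =>
    dichotomy hP hGpos hGsum hfix hGi (hSmeas n)
  refine ⟨ω, ?_⟩
  have hprop : ∀ X : Set Ω, MeasurableSet X →
      ((K ⊆ X ∧ (σ i).tr (P Xᶜ) = 0) ∨ (Disjoint K X ∧ (σ i).tr (P X) = 0)) := by
    set p : Set Ω → Prop := fun X =>
      (K ⊆ X ∧ (σ i).tr (P Xᶜ) = 0) ∨ (Disjoint K X ∧ (σ i).tr (P X) = 0) with hp
    let m' : MeasurableSpace Ω :=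
      { MeasurableSet' := fun X => MeasurableSet X ∧ p X
        measurableSet_empty := by
          refine ⟨MeasurableSet.empty, Or.inr ⟨Set.disjoint_empty K, ?_⟩⟩
          rw [pvm_empty hP]
          unfold DensityOperator.tr
          simp
        measurableSet_compl := by
          rintro X ⟨hXm, hpX⟩
          refine ⟨hXm.compl, ?_⟩
          rcases hpX with ⟨hsub, hc⟩ | ⟨hdis, h0⟩
          · exact Or.inr ⟨Set.disjoint_left.mpr fun a haK haXc => haXc (hsub haK), hc⟩
          · refine Or.inl ⟨fun a ha hax => Set.disjoint_left.mp hdis ha hax, ?_⟩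
            rw [compl_compl]
            exact h0
        measurableSet_iUnion := by
          intro f hf
          refine ⟨MeasurableSet.iUnion fun n => (hf n).1, ?_⟩
          by_cases hex : ∃ n, K ⊆ f n
          · obtain ⟨n, hn⟩ := hex
            refine Or.inl ⟨hn.trans (Set.subset_iUnion f n), ?_⟩
            have hfn : (σ i).tr (P (f n)ᶜ) = 0 := by
              rcases (hf n).2 with ⟨_, hc⟩ | ⟨hdis, _⟩
              · exact hc
              · exact absurd (Set.disjoint_left.mp hdis hω (hn hω)) (by simp)
            exact tr_null_mono (σ i) hP
              (MeasurableSet.iUnion fun m => (hf m).1).compl (hf n).1.compl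
              (Set.compl_subset_compl.mpr (Set.subset_iUnion f n)) hfn
          · push_neg at hex
            have hall : ∀ n, Disjoint K (f n) ∧ (σ i).tr (P (f n)) = 0 := by
              intro n
              rcases (hf n).2 with ⟨hsub, _⟩ | h
              · exact absurd hsub (hex n)
              · exact h
            exact Or.inr ⟨Set.disjoint_iUnion_right.mpr fun n => (hall n).1,
              tr_null_iUnion (σ i) hP (fun n => (hf n).1) fun n => (hall n).2⟩ }
    have hle : MeasurableSpace.generateFrom (Set.range S) ≤ m' := by
      refine MeasurableSpace.generateFrom_le ?_
      rintro X ⟨n, rfl⟩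
      refine ⟨hSmeas n, ?_⟩
      by_cases h : (σ i).tr (P (S n)ᶜ) = 0
      · have hBn : B n = S n := by simp only [hB, if_pos h]
        exact Or.inl ⟨hBn ▸ Set.iInter_subset B n, h⟩
      · rcases hdich n with h0 | h0
        · have hBn : B n = (S n)ᶜ := by simp only [hB, if_neg h]
          have hsub : K ⊆ (S n)ᶜ := hBn ▸ Set.iInter_subset B n
          exact Or.inr ⟨Set.disjoint_left.mpr fun a ha hax => (hsub ha) hax, h0⟩
        · exact absurd h0 h
    intro X hX
    have hX' : MeasurableSet[MeasurableSpace.generateFrom (Set.range S)] X := by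
      rw [hMeq]; exact hX
    exact (hle X hX').2
  intro X hX hωX
  rcases hprop X hX with ⟨hsub, _⟩ | ⟨_, h0⟩
  · exact absurd (hsub hω) hωX
  · exact h0

end Point

/-- If every effect of a PVM `P` on a standard Borel space is a fixed point of the
Heisenberg-picture entanglement-breaking channel `A ↦ Σᵢ tr(σᵢ A) Gᵢ`, then (a) `P` is
discrete, and (b) `P` commutes with any PVM `Q` having the same fixed-point property
with the same families `(Gᵢ)` and `(σᵢ)`. -/
theorem stmt11 {H : Type*} [NormedAddCommGroup H] [InnerProductSpace ℂ H] [CompleteSpace H]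
    [TopologicalSpace.SeparableSpace H]
    {Ω : Type*} [MeasurableSpace Ω] [StandardBorelSpace Ω]
    (P : Set Ω → (H →L[ℂ] H)) (hP : IsPVM P)
    (G : ℕ → H →L[ℂ] H) (σ : ℕ → DensityOperator H)
    (hGpos : ∀ i, (G i).IsPositive)
    (hGsum : ∀ φ : H, HasSum (fun i => ⟪φ, G i φ⟫) ((‖φ‖ ^ 2 : ℝ) : ℂ))
    (hfix : ∀ X : Set Ω, MeasurableSet X → ∀ φ χ : H,
      ⟪φ, P X χ⟫ = ∑' i, (σ i).tr (P X) * ⟪φ, G i χ⟫) :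
    (∃ D : Set Ω, D.Countable ∧ P (Set.univ \ D) = 0) ∧
    (∀ (Ω' : Type) [MeasurableSpace Ω'] [StandardBorelSpace Ω'],
      ∀ Q : Set Ω' → (H →L[ℂ] H), IsPVM Q →
        (∀ Y : Set Ω', MeasurableSet Y → ∀ φ χ : H,
          ⟪φ, Q Y χ⟫ = ∑' i, (σ i).tr (Q Y) * ⟪φ, G i χ⟫) →
        ∀ (X : Set Ω) (Y : Set Ω'), MeasurableSet X → MeasurableSet Y →
          P X * Q Y = Q Y * P X) := by
  classical
  constructor
  · -- (a) discreteness
    by_cases hΩ : Nonempty Ω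
    · have hpt : ∀ i : ℕ, G i ≠ 0 →
          ∃ ω : Ω, ∀ X, MeasurableSet X → ω ∉ X → (σ i).tr (P X) = 0 :=
        fun i hi => exists_point hP hGpos hGsum hfix hi
      set pt : ℕ → Ω := fun i =>
        if h : G i ≠ 0 then (hpt i h).choose else Classical.arbitrary Ω with hptdef
      refine ⟨Set.range pt, Set.countable_range pt, ?_⟩
      have hD : MeasurableSet (Set.range pt) := (Set.countable_range pt).measurableSet
      have hXm : MeasurableSet (Set.univ \ Set.range pt) := MeasurableSet.univ.diff hD
      apply diag_ext'
      intro φ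
      rw [hfix _ hXm φ φ]
      have hterm : ∀ i, (σ i).tr (P (Set.univ \ Set.range pt)) * ⟪φ, G i φ⟫ = 0 := by
        intro i
        by_cases hi : G i ≠ 0
        · have hsp := (hpt i hi).choose_spec
          have hmem : pt i ∈ Set.range pt := ⟨i, rfl⟩
          have hpteq : pt i = (hpt i hi).choose := by rw [hptdef]; simp [dif_pos hi]
          have hnot : (hpt i hi).choose ∉ Set.univ \ Set.range pt := by
            rw [← hpteq]
            intro hmem2
            exact hmem2.2 hmem
          rw [hsp _ hXm hnot, zero_mul]
        · push_neg at hi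
          rw [hi]
          simp
      rw [tsum_congr hterm, tsum_zero]
      simp
    · refine ⟨∅, Set.countable_empty, ?_⟩
      have h1 : (Set.univ : Set Ω) \ ∅ = ∅ := by
        rw [Set.diff_empty]
        exact Set.univ_eq_empty_iff.mpr (not_nonempty_iff.mp hΩ)
      rw [h1, pvm_empty hP]
  · -- (b) commutation
    intro Ω' _ _ Q hQ hfixQ X Y hX hY
    ext χ
    refine ext_inner_left ℂ fun φ => ?_
    have hcomm : ∀ i, P X * G i = G i * P X := fun i =>
      commute_G hP hGpos hGsum hfix hX i
    have hsa : ∀ u v : H, ⟪P X u, v⟫ = ⟪u, P X v⟫ := sa_symm (hP.2.1 X hX).1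
    calc ⟪φ, (P X * Q Y) χ⟫
        = ⟪φ, P X (Q Y χ)⟫ := rfl
      _ = ⟪P X φ, Q Y χ⟫ := (hsa φ (Q Y χ)).symm
      _ = ∑' i, (σ i).tr (Q Y) * ⟪P X φ, G i χ⟫ := hfixQ Y hY (P X φ) χ
      _ = ∑' i, (σ i).tr (Q Y) * ⟪φ, G i (P X χ)⟫ := by
          refine tsum_congr fun i => ?_
          congr 1
          calc ⟪P X φ, G i χ⟫ = ⟪φ, P X (G i χ)⟫ := hsa φ (G i χ)
            _ = ⟪φ, G i (P X χ)⟫ := by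
                have h2 : (P X * G i) χ = (G i * P X) χ := by rw [hcomm i]
                rw [ContinuousLinearMap.mul_apply, ContinuousLinearMap.mul_apply] at h2
                rw [h2]
      _ = ⟪φ, Q Y (P X χ)⟫ := (hfixQ Y hY φ (P X χ)).symm
      _ = ⟪φ, (Q Y * P X) χ⟫ := rfl
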